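/- Let m be even and let B be a real tensor of order m and dimension n. If B is an R tensor, then {𝓘, B} is an R tensor pair, where 𝓘 is the identity tensor of order m and dimension n. -/

import Mathlib

open Finset

/-- A real tensor of order `m` and dimension `n`, indexed by a first index in `Fin n`
and `m - 1` further indices in `Fin n`. -/
abbrev Tensor (m n : ℕ) : Type := Fin n → (Fin (m - 1) → Fin n) → ℝ

/-- `tApp A x` is the vector `A x^{m-1}` with `i`-th component
`∑_{i₂,…,i_m} a_{i i₂ … i_m} x_{i₂} ⋯ x_{i_m}`. -/
noncomputable def tApp {m n : ℕ} (A : Tensor m n) (x : Fin n → ℝ) : Fin n → ℝ :=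
  fun i => ∑ j : Fin (m - 1) → Fin n, A i j * ∏ k, x (j k)

/-- The identity tensor: entries `1` when all indices coincide, `0` otherwise,
so that `tApp (idT m n) x = x^{[m-1]}`. -/
def idT (m n : ℕ) : Tensor m n :=
  fun i j => if (∀ k, j k = i) then 1 else 0

/-- The solution set of the horizontal tensor complementarity problem HTCP(A,B,q). -/
def SOL {m n : ℕ} (A B : Tensor m n) (q : Fin n → ℝ) :
    Set ((Fin n → ℝ) × (Fin n → ℝ)) :=
  {p | p.1 ⊓ p.2 = 0 ∧ tApp A p.1 - tApp B p.2 = q}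

/-- `{A,B}` is an R0 tensor pair. -/
def R0Pair {m n : ℕ} (A B : Tensor m n) : Prop :=
  ∀ x y : Fin n → ℝ, x ⊓ y = 0 → tApp A x - tApp B y = 0 → x = 0 ∧ y = 0

/-- `{A,B}` is a P tensor pair. -/
def PPair {m n : ℕ} (A B : Tensor m n) : Prop :=
  ∀ x y : Fin n → ℝ, x * y ≤ 0 → tApp A x - tApp B y = 0 → x = 0 ∧ y = 0

/-- `B` is an R0 tensor. -/
def R0Tensor {m n : ℕ} (B : Tensor m n) : Prop :=
  ∀ x : Fin n → ℝ, x ⊓ tApp B x = 0 → x = 0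

/-- `x` solves the tensor complementarity problem TCP(B,q). -/
def TCPsol {m n : ℕ} (B : Tensor m n) (q x : Fin n → ℝ) : Prop :=
  0 ≤ x ∧ 0 ≤ tApp B x + q ∧ x ⊓ (tApp B x + q) = 0

/-- `B` is an R tensor: an R0 tensor such that TCP(B,e) has a unique solution,
where `e = (1,…,1)`. -/
def RTensor {m n : ℕ} (B : Tensor m n) : Prop :=
  R0Tensor B ∧ ∃! x : Fin n → ℝ, TCPsol B (fun _ => 1) x

/-- `{A,B}` is an R tensor pair: an R0 tensor pair such that for some `q`,
HTCP(A,B,q) has a unique solution `(x̄,ȳ)` with `x̄ + ȳ > 0`, and the linearized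
HLCP(∇(A x̄^{m-1}), ∇(B ȳ^{m-1}), (m-1)q) has a unique solution. -/
def RPair {m n : ℕ} (A B : Tensor m n) : Prop :=
  R0Pair A B ∧ ∃ q xb yb : Fin n → ℝ,
    (∀ p : (Fin n → ℝ) × (Fin n → ℝ), p ∈ SOL A B q ↔ p = (xb, yb)) ∧
    (∀ i, 0 < xb i + yb i) ∧
    (∃! p : (Fin n → ℝ) × (Fin n → ℝ),
      p.1 ⊓ p.2 = 0 ∧
      fderiv ℝ (tApp A) xb p.1 - fderiv ℝ (tApp B) yb p.2 = ((m - 1 : ℕ) : ℝ) • q)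

section helpers

variable {m n : ℕ}

lemma tApp_idT (x : Fin n → ℝ) (i : Fin n) :
    tApp (idT m n) x i = x i ^ (m - 1) := by
  unfold tApp idT
  rw [Finset.sum_eq_single (fun _ => i : Fin (m - 1) → Fin n)]
  · rw [if_pos (fun _ => rfl), one_mul, Finset.prod_const, Finset.card_univ, Fintype.card_fin]
  · intro j _ hj
    rw [if_neg (fun h => hj (funext h)), zero_mul]
  · intro h; exact absurd (Finset.mem_univ _) h

lemma tApp_zero (hm : 2 ≤ m) (B : Tensor m n) : tApp B 0 = 0 := by
  funext i
  show (∑ j : Fin (m - 1) → Fin n, B i j * ∏ k, (0 : Fin n → ℝ) (j k)) = 0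
  have h0 : ∀ j : Fin (m - 1) → Fin n, (∏ k, (0 : Fin n → ℝ) (j k)) = 0 := by
    intro j
    simp only [Pi.zero_apply, Finset.prod_const, Finset.card_univ, Fintype.card_fin]
    exact zero_pow (by omega)
  exact Finset.sum_eq_zero fun j _ => by rw [h0 j, mul_zero]

noncomputable def DB (B : Tensor m n) (a : Fin n → ℝ) : (Fin n → ℝ) →L[ℝ] (Fin n → ℝ) :=
  ContinuousLinearMap.pi fun i => ∑ j : Fin (m - 1) → Fin n,
    B i j • ((∑ k, (∏ l ∈ Finset.univ.erase k, a (j l)) • ContinuousLinearMap.proj (R := ℝ) k).comp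
      (ContinuousLinearMap.pi fun k => ContinuousLinearMap.proj (j k)))

lemma hasFDerivAt_tApp (B : Tensor m n) (a : Fin n → ℝ) :
    HasFDerivAt (tApp B) (DB B a) a := by
  have e1 : tApp B = fun x (i : Fin n) => ∑ j : Fin (m - 1) → Fin n, B i j * ∏ k, x (j k) := rfl
  rw [e1]
  unfold DB
  refine hasFDerivAt_pi.mpr fun i => ?_
  refine HasFDerivAt.fun_sum fun j _ => ?_
  have hP : HasFDerivAt (fun x : Fin n → ℝ => fun k => x (j k))
      (ContinuousLinearMap.pi fun k => ContinuousLinearMap.proj (R := ℝ) (j k)) a :=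
    (ContinuousLinearMap.pi fun k => ContinuousLinearMap.proj (R := ℝ) (j k)).hasFDerivAt (x := a)
  have hq := hasFDerivAt_finset_prod (𝕜 := ℝ) (u := Finset.univ)
    (x := fun k : Fin (m - 1) => a (j k))
  have hp : HasFDerivAt (fun x : Fin n → ℝ => ∏ k, x (j k))
      ((∑ k, (∏ l ∈ Finset.univ.erase k, a (j l)) • ContinuousLinearMap.proj (R := ℝ) k).comp
        (ContinuousLinearMap.pi fun k => ContinuousLinearMap.proj (j k))) a := by
    exact HasFDerivAt.comp (g := (∏ i ∈ Finset.univ, · i))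
      (f := fun x (k : Fin (m - 1)) => x (j k)) a hq hP
  exact hp.const_mul (B i j)

lemma DB_apply (B : Tensor m n) (a v : Fin n → ℝ) (i : Fin n) :
    DB B a v i = ∑ j : Fin (m - 1) → Fin n,
      B i j * ∑ k, (∏ l ∈ Finset.univ.erase k, a (j l)) * v (j k) := by
  simp [DB, ContinuousLinearMap.pi_apply, ContinuousLinearMap.sum_apply,
    ContinuousLinearMap.smul_apply, ContinuousLinearMap.proj_apply,
    ContinuousLinearMap.comp_apply, smul_eq_mul]

lemma DB_zero_apply (h3 : 3 ≤ m) (B : Tensor m n) (v : Fin n → ℝ) (i : Fin n) :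
    DB B 0 v i = 0 := by
  rw [DB_apply]
  refine Finset.sum_eq_zero fun j _ => ?_
  have hz : ∀ k : Fin (m - 1), (∏ l ∈ Finset.univ.erase k, (0 : Fin n → ℝ) (j l)) = 0 := by
    intro k
    obtain ⟨l, hl⟩ : (Finset.univ.erase k).Nonempty := by
      rw [← Finset.card_pos, Finset.card_erase_of_mem (Finset.mem_univ k), Finset.card_univ,
        Fintype.card_fin]
      omega
    exact Finset.prod_eq_zero hl rfl
  rw [Finset.sum_eq_zero fun k _ => by rw [hz k, zero_mul], mul_zero]

lemma DB_two_apply (hm2 : m = 2) (B : Tensor m n) (v : Fin n → ℝ) (i : Fin n) :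
    DB B 0 v i = tApp B v i := by
  subst hm2
  rw [DB_apply]
  show _ = ∑ j : Fin (2 - 1) → Fin n, B i j * ∏ k, v (j k)
  refine Finset.sum_congr rfl fun j _ => ?_
  congr 1
  have hall : ∀ k k' : Fin (2 - 1), k = k' := by
    intro k k'
    have h1 := k.isLt
    have h2 := k'.isLt
    exact Fin.ext (by omega)
  set k0 : Fin (2 - 1) := ⟨0, by omega⟩
  rw [Finset.sum_eq_single k0 (fun b _ hb => absurd (hall b k0) hb)
      (fun h => absurd (Finset.mem_univ k0) h),
    Finset.prod_eq_single k0 (fun b _ hb => absurd (hall b k0) hb)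
      (fun h => absurd (Finset.mem_univ k0) h)]
  have he : (Finset.univ.erase k0 : Finset (Fin (2 - 1))) = ∅ := by
    rw [Finset.eq_empty_iff_forall_notMem]
    intro l hl
    exact (Finset.mem_erase.mp hl).1 (hall l k0)
  rw [he, Finset.prod_empty, one_mul]

lemma fderiv_tApp_idT (hm : 2 ≤ m) (v : Fin n → ℝ) (i : Fin n) :
    fderiv ℝ (tApp (idT m n)) (fun _ => 1) v i = ((m - 1 : ℕ) : ℝ) * v i := by
  have e1 : tApp (idT m n) = fun x (i : Fin n) => x i ^ (m - 1) :=
    funext fun x => funext fun i => tApp_idT x i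
  have hF : HasFDerivAt (tApp (idT m n))
      (ContinuousLinearMap.pi fun i : Fin n =>
        (((m - 1 : ℕ) : ℝ) * (1 : ℝ) ^ (m - 1 - 1)) • ContinuousLinearMap.proj (R := ℝ) (φ := fun _ : Fin n => ℝ) i)
      (fun _ => 1) := by
    rw [e1]
    refine hasFDerivAt_pi.mpr fun i => ?_
    have h1 : HasFDerivAt (fun x : Fin n → ℝ => x i)
        (ContinuousLinearMap.proj (R := ℝ) i) (fun _ => 1) :=
      hasFDerivAt_apply i _
    exact (hasDerivAt_pow (m - 1) ((1 : ℝ))).comp_hasFDerivAt (fun _ => (1 : ℝ)) h1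
  rw [hF.fderiv]
  simp

end helpers

/-- for even `m`, if `B` is an R tensor then `{𝓘, B}` is an R tensor pair. -/
theorem rPair_of_rTensor (m n : ℕ) (hm : 2 ≤ m) (hn : 1 ≤ n) (hme : Even m)
    (B : Tensor m n) (hB : RTensor B) : RPair (idT m n) B := by
  obtain ⟨hR0, x₀, hx₀, huniq⟩ := hB
  have hm1 : m - 1 ≠ 0 := by omega
  have hB0 : tApp B 0 = 0 := tApp_zero hm B
  have h0sol : TCPsol B (fun _ => 1) 0 := by
    refine ⟨le_refl _, ?_, ?_⟩
    · rw [hB0]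
      refine Pi.le_def.mpr fun i => ?_
      show (0:ℝ) ≤ (0 : Fin n → ℝ) i + 1
      norm_num
    · rw [hB0]
      funext i
      show (0:ℝ) ⊓ ((0 : Fin n → ℝ) i + 1) = 0
      norm_num
  have hTCPuniq : ∀ y, TCPsol B (fun _ => 1) y → y = 0 :=
    fun y hy => (huniq y hy).trans (huniq 0 h0sol).symm
  have hfacts : ∀ x y : Fin n → ℝ, x ⊓ y = 0 →
      (∀ i, 0 ≤ x i) ∧ (∀ i, 0 ≤ y i) ∧ (∀ i, x i = 0 ∨ y i = 0) := by
    intro x y hxy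
    have hmin : ∀ i, x i ⊓ y i = 0 := fun i => congrFun hxy i
    refine ⟨fun i => ?_, fun i => ?_, fun i => ?_⟩
    · rw [← hmin i]; exact inf_le_left
    · rw [← hmin i]; exact inf_le_right
    · rcases le_total (x i) (y i) with h | h
      · left; rw [← hmin i, inf_eq_left.mpr h]
      · right; rw [← hmin i, inf_eq_right.mpr h]
  constructor
  · -- R0 pair
    intro x y hxy hAB
    obtain ⟨hx0, hy0, hcomp⟩ := hfacts x y hxy
    have hEq : ∀ i, x i ^ (m - 1) = tApp B y i := by
      intro i
      have h := congrFun hAB i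
      simp only [Pi.sub_apply, Pi.zero_apply] at h
      rw [tApp_idT] at h
      linarith
    have hy : y = 0 := by
      apply hR0
      funext i
      show y i ⊓ tApp B y i = 0
      rcases hcomp i with hxi | hyi
      · have hz : tApp B y i = 0 := by rw [← hEq i, hxi, zero_pow hm1]
        rw [hz]
        exact inf_eq_right.mpr (hy0 i)
      · rw [hyi]
        refine inf_eq_left.mpr ?_
        rw [← hEq i]
        exact pow_nonneg (hx0 i) _
    have hx : x = 0 := by
      funext i
      show x i = 0
      have h := hEq i
      rw [hy, hB0] at h
      exact (pow_eq_zero_iff hm1).mp h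
    exact ⟨hx, hy⟩
  · -- R-pair data
    have hSOL : ∀ p : (Fin n → ℝ) × (Fin n → ℝ),
        p ∈ SOL (idT m n) B (fun _ => 1) ↔ p = ((fun _ => 1), 0) := by
      rintro ⟨x, y⟩
      constructor
      · rintro ⟨hxy, heq⟩
        obtain ⟨hx0, hy0, hcomp⟩ := hfacts x y hxy
        have hEq : ∀ i, x i ^ (m - 1) - tApp B y i = 1 := by
          intro i
          have h := congrFun heq i
          simp only [Pi.sub_apply] at h
          rwa [tApp_idT] at h
        have hysol : TCPsol B (fun _ => 1) y := by
          refine ⟨Pi.le_def.mpr fun i => hy0 i, Pi.le_def.mpr fun i => ?_, ?_⟩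
          · show (0:ℝ) ≤ tApp B y i + 1
            have h := hEq i
            have hp : (0:ℝ) ≤ x i ^ (m - 1) := pow_nonneg (hx0 i) _
            linarith
          · funext i
            show y i ⊓ (tApp B y i + 1) = 0
            rcases hcomp i with hxi | hyi
            · have hz : tApp B y i + 1 = 0 := by
                have h := hEq i
                rw [hxi, zero_pow hm1] at h
                linarith
              rw [hz]
              exact inf_eq_right.mpr (hy0 i)
            · rw [hyi]
              refine inf_eq_left.mpr ?_
              have h := hEq i
              have hp : (0:ℝ) ≤ x i ^ (m - 1) := pow_nonneg (hx0 i) _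
              linarith
        have hy : y = 0 := hTCPuniq y hysol
        have hx : x = fun _ => 1 := by
          funext i
          have h := hEq i
          rw [hy, hB0] at h
          simp only [Pi.zero_apply, sub_zero] at h
          have h1 : x i ^ (m - 1) = 1 ^ (m - 1) := by rw [one_pow]; exact h
          exact (pow_left_strictMonoOn₀ hm1).injOn (hx0 i)
            (by norm_num : (1:ℝ) ∈ {a : ℝ | 0 ≤ a}) h1
        rw [Prod.ext_iff]
        exact ⟨hx, hy⟩
      · intro hp
        rw [Prod.mk.injEq] at hp
        obtain ⟨rfl, rfl⟩ := hp
        constructor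
        · funext i
          show (1:ℝ) ⊓ (0 : Fin n → ℝ) i = 0
          simp
        · funext i
          show tApp (idT m n) (fun _ => 1) i - tApp B 0 i = 1
          rw [tApp_idT, hB0, one_pow]
          simp
    refine ⟨(fun _ => 1), (fun _ => 1), 0, hSOL, fun i => by norm_num, ?_⟩
    have hDI : ∀ (v : Fin n → ℝ) (i : Fin n),
        fderiv ℝ (tApp (idT m n)) (fun _ => 1) v i = ((m - 1 : ℕ) : ℝ) * v i :=
      fderiv_tApp_idT hm
    have hfB : fderiv ℝ (tApp B) 0 = DB B 0 := (hasFDerivAt_tApp B 0).fderiv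
    rcases eq_or_lt_of_le hm with hm2 | hm3
    · -- m = 2
      have hm2' : m = 2 := hm2.symm
      have hDB : ∀ (v : Fin n → ℝ) (i : Fin n), fderiv ℝ (tApp B) 0 v i = tApp B v i := by
        intro v i
        rw [hfB, DB_two_apply hm2']
      have hcast : ((m - 1 : ℕ) : ℝ) = 1 := by rw [hm2']; norm_num
      have hexp : m - 1 = 1 := by omega
      refine ⟨((fun _ => 1), 0), ⟨?_, ?_⟩, ?_⟩
      · funext i
        show (1:ℝ) ⊓ (0 : Fin n → ℝ) i = 0
        simp
      · funext i
        simp only [Pi.sub_apply, Pi.smul_apply, smul_eq_mul]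
        rw [hDI, hDB, hB0]
        simp
      · rintro ⟨x, y⟩ ⟨hxy, heq⟩
        have hmem : (x, y) ∈ SOL (idT m n) B (fun _ => 1) := by
          refine ⟨hxy, ?_⟩
          funext i
          have h := congrFun heq i
          simp only [Pi.sub_apply, Pi.smul_apply, smul_eq_mul] at h
          rw [hDI, hDB, hcast] at h
          show tApp (idT m n) x i - tApp B y i = 1
          rw [tApp_idT, hexp, pow_one]
          linarith
        exact (hSOL (x, y)).mp hmem
    · -- m ≥ 3
      have h3 : 3 ≤ m := hm3
      have hDB : ∀ (v : Fin n → ℝ) (i : Fin n), fderiv ℝ (tApp B) 0 v i = 0 := by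
        intro v i
        rw [hfB, DB_zero_apply h3]
      have hc : ((m - 1 : ℕ) : ℝ) ≠ 0 := Nat.cast_ne_zero.mpr hm1
      refine ⟨((fun _ => 1), 0), ⟨?_, ?_⟩, ?_⟩
      · funext i
        show (1:ℝ) ⊓ (0 : Fin n → ℝ) i = 0
        simp
      · funext i
        simp only [Pi.sub_apply, Pi.smul_apply, smul_eq_mul]
        rw [hDI, hDB]
        ring
      · rintro ⟨x, y⟩ ⟨hxy, heq⟩
        obtain ⟨hx0, hy0, hcomp⟩ := hfacts x y hxy
        have hx : x = fun _ => 1 := by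
          funext i
          have h := congrFun heq i
          simp only [Pi.sub_apply, Pi.smul_apply, smul_eq_mul] at h
          rw [hDI, hDB] at h
          have h' : ((m - 1 : ℕ) : ℝ) * x i = ((m - 1 : ℕ) : ℝ) * 1 := by linarith
          exact mul_left_cancel₀ hc h'
        have hy : y = 0 := by
          funext i
          show y i = 0
          rcases hcomp i with hxi | hyi
          · exfalso
            rw [hx] at hxi
            norm_num at hxi
          · exact hyi
        rw [Prod.ext_iff]
        exact ⟨hx, hy⟩
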